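/- Let G = (Σ, V, S, P) be a context-free grammar without empty productions, and let e_G be the DA expression over Γ_G = Σ ∪ V ∪ {α, ω, X} defined by e_G = φ₀ − (φ₁ ∪ φ₂ ∪ φ₃ ∪ φ₄ ∪ φ₅ ∪ φ₆ ∪ φ₇), where (writing Σ also for the expression ⋃_{b∈Σ} b): φ₀ = αΣω, φ₁ = αΣ(ω − α), φ₂ = α(Σα − α), φ₃ = ⋃_{Z₀→Z₁⋯Zₙ ∈ P} α(Z₁⋯Zₙ − Z₀)α, φ₄ = (α − αΣ)Sω, φ₅ = α(Σ − X)α, φ₆ = α(XX − X)α, φ₇ = α(XΣ ∩ Σ)α. Then L(G) ⊉ Σ⁺ (i.e., some nonempty word over Σ is not generated by G) if and only if e_G is finitely satisfiable. -/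

import Mathlib

/-- Syntax of the Downward Algebra (DA): expressions built from relation names
in a vocabulary `Γ` using union, intersection, difference, and composition. -/
inductive DA (Γ : Type) : Type where
  | var : Γ → DA Γ
  | union : DA Γ → DA Γ → DA Γ
  | inter : DA Γ → DA Γ → DA Γ
  | diff : DA Γ → DA Γ → DA Γ
  | comp : DA Γ → DA Γ → DA Γ

namespace DA

/-- Semantics: the binary relation `e(I)` defined by expression `e` in a structure `I`
(a structure over `Γ` with domain `D` assigns a binary relation on `D` to each name). -/
def eval {Γ D : Type} (I : Γ → D → D → Prop) : DA Γ → D → D → Prop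
  | .var a => I a
  | .union e f => fun x y => eval I e x y ∨ eval I f x y
  | .inter e f => fun x y => eval I e x y ∧ eval I f x y
  | .diff e f => fun x y => eval I e x y ∧ ¬ eval I f x y
  | .comp e f => fun x y => ∃ z, eval I e x z ∧ eval I f z y

/-- The difference degree of an expression. -/
def deg {Γ : Type} : DA Γ → ℕ
  | .var _ => 0
  | .union e f => max (deg e) (deg f)
  | .inter e f => max (deg e) (deg f)
  | .diff e f => max (deg e) (deg f) + 1
  | .comp e f => max (deg e) (deg f)

/-- A structure is finite when each relation is a finite binary relation. -/
def FiniteStruct {Γ D : Type} (I : Γ → D → D → Prop) : Prop :=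
  ∀ a, {p : D × D | I a p.1 p.2}.Finite

/-- An expression is finitely satisfiable if some finite structure makes it
evaluate to a nonempty relation. -/
def FinSat {Γ : Type} (e : DA Γ) : Prop :=
  ∃ (D : Type) (I : Γ → D → D → Prop), FiniteStruct I ∧ ∃ x y, eval I e x y

end DA

/-- The vocabulary Γ_G = Σ ∪ V ∪ {α, ω, X}: a relation name for every terminal,
a relation name for every nonterminal, and three fresh names α, ω, X. -/
inductive Voc (T N : Type) : Type where
  | term : T → Voc T N
  | nt : N → Voc T N
  | alpha : Voc T N
  | omega : Voc T N
  | X : Voc T N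

namespace DA

/-- Union of a nonempty list of expressions (head and tail). -/
def unionAll {Γ : Type} (e : DA Γ) (l : List (DA Γ)) : DA Γ := l.foldl .union e

/-- Composition of a nonempty list of expressions (head and tail). -/
def compAll {Γ : Type} (e : DA Γ) (l : List (DA Γ)) : DA Γ := l.foldl .comp e

end DA

/-- The expression Σ = ⋃_{b ∈ Σ} b, the union of all terminal relation names
(T is a nonempty finite type, so the match never takes the junk branch). -/
noncomputable def sigmaE (T N : Type) [Fintype T] : DA (Voc T N) :=
  match (Finset.univ (α := T)).toList with
  | [] => .var .alpha
  | b :: l => DA.unionAll (.var (.term b)) (l.map fun b' => .var (.term b'))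

/-- The relation name associated to a grammar symbol. -/
def symVoc {T N : Type} : Symbol T N → Voc T N
  | .terminal b => .term b
  | .nonterminal Z => .nt Z

/-- The member α(Z₁⋯Zₙ − Z₀)α of φ₃ contributed by a production Z₀ → Z₁⋯Zₙ
(the grammar has no empty production, so the junk branch for an empty
right-hand side is never taken). -/
def ruleExpr {T N : Type} (r : ContextFreeRule T N) : DA (Voc T N) :=
  .comp (.var .alpha)
    (.comp
      (.diff
        (match r.output with
         | [] => .var .X
         | s :: l => DA.compAll (.var (symVoc s)) (l.map fun s' => .var (symVoc s')))
        (.var (.nt r.input)))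
      (.var .alpha))

/-- The expression e_G = φ₀ − (φ₁ ∪ φ₂ ∪ φ₃ ∪ φ₄ ∪ φ₅ ∪ φ₆ ∪ φ₇) over Γ_G, where
φ₀ = αΣω, φ₁ = αΣ(ω − α), φ₂ = α(Σα − α), φ₃ = ⋃_{Z₀→Z₁⋯Zₙ ∈ P} α(Z₁⋯Zₙ − Z₀)α,
φ₄ = (α − αΣ)Sω, φ₅ = α(Σ − X)α, φ₆ = α(XX − X)α, φ₇ = α(XΣ ∩ Σ)α. -/
noncomputable def eG (T : Type) [Fintype T] (G : ContextFreeGrammar T) : DA (Voc T G.NT) :=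
  let av : DA (Voc T G.NT) := .var .alpha
  let ov : DA (Voc T G.NT) := .var .omega
  let Xv : DA (Voc T G.NT) := .var .X
  let Sv : DA (Voc T G.NT) := .var (.nt G.initial)
  let Se : DA (Voc T G.NT) := sigmaE T G.NT
  let f0 := DA.comp av (DA.comp Se ov)
  let f1 := DA.comp av (DA.comp Se (.diff ov av))
  let f2 := DA.comp av (.diff (DA.comp Se av) av)
  let f4 := DA.comp (.diff av (DA.comp av Se)) (DA.comp Sv ov)
  let f5 := DA.comp av (DA.comp (.diff Se Xv) av)
  let f6 := DA.comp av (DA.comp (.diff (DA.comp Xv Xv) Xv) av)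
  let f7 := DA.comp av (DA.comp (.inter (DA.comp Xv Se) Se) av)
  .diff f0
    (DA.unionAll (.union f1 (.union f2 (.union f4 (.union f5 (.union f6 f7)))))
      (G.rules.toList.map ruleExpr))


section Helpers

open DA

variable {Γ D σ : Type}

/-- Chains of base relations along a list of symbols. -/
def relChain (R : σ → D → D → Prop) : List σ → D → D → Prop
  | [], p, q => p = q
  | s :: l, p, q => ∃ m, R s p m ∧ relChain R l m q

lemma relChain_nil (R : σ → D → D → Prop) (p q : D) : relChain R [] p q ↔ p = q := Iff.rfl

lemma relChain_cons (R : σ → D → D → Prop) (s : σ) (l : List σ) (p q : D) :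
    relChain R (s :: l) p q ↔ ∃ m, R s p m ∧ relChain R l m q := Iff.rfl

lemma relChain_single (R : σ → D → D → Prop) (s : σ) (p q : D) :
    relChain R [s] p q ↔ R s p q := by
  constructor
  · rintro ⟨m, h, rfl⟩; exact h
  · intro h; exact ⟨q, h, rfl⟩

lemma relChain_append (R : σ → D → D → Prop) (u v : List σ) (p q : D) :
    relChain R (u ++ v) p q ↔ ∃ m, relChain R u p m ∧ relChain R v m q := by
  induction u generalizing p with
  | nil => simp [relChain]
  | cons s u ih =>
    simp only [List.cons_append, relChain_cons, ih]
    constructor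
    · rintro ⟨m, h, m', h1, h2⟩; exact ⟨m', ⟨m, h, h1⟩, h2⟩
    · rintro ⟨m', ⟨m, h, h1⟩, h2⟩; exact ⟨m, h, m', h1, h2⟩

lemma relChain_mono {R R' : σ → D → D → Prop} (h : ∀ s p q, R s p q → R' s p q) :
    ∀ l (p q : D), relChain R l p q → relChain R' l p q := by
  intro l
  induction l with
  | nil => intro p q hh; exact hh
  | cons s l ih => rintro p q ⟨m, hm, hc⟩; exact ⟨m, h _ _ _ hm, ih _ _ hc⟩

lemma relChain_map {τ : Type} (R : σ → D → D → Prop) (f : τ → σ) :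
    ∀ l (p q : D), relChain R (l.map f) p q ↔ relChain (fun t => R (f t)) l p q := by
  intro l
  induction l with
  | nil => intro p q; exact Iff.rfl
  | cons s l ih => intro p q; simp only [List.map_cons, relChain_cons, ih]

lemma relChain_head {R : σ → D → D → Prop} {P : D → Prop} (hR : ∀ s p q, R s p q → P p)
    {l : List σ} {p q : D} (hl : l ≠ []) (hc : relChain R l p q) : P p := by
  cases l with
  | nil => exact absurd rfl hl
  | cons s l => obtain ⟨m, hm, -⟩ := hc; exact hR _ _ _ hm

lemma relChain_last {R : σ → D → D → Prop} {P : D → Prop} (hR : ∀ s p q, R s p q → P q) :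
    ∀ {l : List σ} {p q : D}, l ≠ [] → relChain R l p q → P q := by
  intro l
  induction l with
  | nil => intro p q h; exact absurd rfl h
  | cons s l ih =>
    intro p q _ hc
    obtain ⟨m, hm, hc⟩ := hc
    cases l with
    | nil => cases hc; exact hR _ _ _ hm
    | cons t l => exact ih (by simp) hc

lemma eval_unionAll {I : Γ → D → D → Prop} :
    ∀ (l : List (DA Γ)) (e : DA Γ) (x y : D),
      eval I (unionAll e l) x y ↔ eval I e x y ∨ ∃ f ∈ l, eval I f x y := by
  intro l
  induction l with
  | nil => intro e x y; simp [unionAll]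
  | cons f l ih =>
    intro e x y
    have : unionAll e (f :: l) = unionAll (.union e f) l := rfl
    rw [this, ih]
    simp only [eval, List.mem_cons]
    constructor
    · rintro (⟨h | h⟩ | ⟨g, hg, h⟩)
      · exact Or.inl h
      · exact Or.inr ⟨f, Or.inl rfl, h⟩
      · exact Or.inr ⟨g, Or.inr hg, h⟩
    · rintro (h | ⟨g, (rfl | hg), h⟩)
      · exact Or.inl (Or.inl h)
      · exact Or.inl (Or.inr h)
      · exact Or.inr ⟨g, hg, h⟩

lemma eval_compAll {I : Γ → D → D → Prop} :
    ∀ (l : List (DA Γ)) (e : DA Γ) (x y : D),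
      eval I (compAll e l) x y ↔
        ∃ m, eval I e x m ∧ relChain (fun g : DA Γ => eval I g) l m y := by
  intro l
  induction l with
  | nil =>
    intro e x y
    constructor
    · intro h; exact ⟨y, h, rfl⟩
    · rintro ⟨m, h, rfl⟩; exact h
  | cons f l ih =>
    intro e x y
    have : compAll e (f :: l) = compAll (.comp e f) l := rfl
    rw [this, ih]
    constructor
    · rintro ⟨m, ⟨z, he, hf⟩, hc⟩; exact ⟨z, he, m, hf, hc⟩
    · rintro ⟨z, he, m, hf, hc⟩; exact ⟨m, ⟨z, he, hf⟩, hc⟩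

lemma eval_compAll_map {τ : Type} {I : Γ → D → D → Prop} (f : τ → Γ)
    (l : List τ) (s : τ) (x y : D) :
    eval I (compAll (.var (f s)) (l.map fun t => .var (f t))) x y ↔
      relChain (fun t p q => I (f t) p q) (s :: l) x y := by
  rw [eval_compAll]
  have : ∀ (m : D), relChain (fun g : DA Γ => eval I g) (l.map fun t => .var (f t)) m y ↔
      relChain (fun t p q => I (f t) p q) l m y := by
    intro m
    rw [relChain_map]
    exact Iff.rfl
  constructor
  · rintro ⟨m, h1, h2⟩; exact ⟨m, h1, (this m).mp h2⟩
  · rintro ⟨m, h1, h2⟩; exact ⟨m, h1, (this m).mpr h2⟩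

lemma eval_sigmaE {T N : Type} [Fintype T] [Nonempty T] {D : Type}
    (I : Voc T N → D → D → Prop) (x y : D) :
    eval I (sigmaE T N) x y ↔ ∃ b : T, I (.term b) x y := by
  unfold sigmaE
  split
  next h =>
    exfalso
    obtain ⟨b⟩ := ‹Nonempty T›
    have hb := Finset.mem_toList.mpr (Finset.mem_univ b)
    rw [h] at hb
    exact absurd hb List.not_mem_nil
  next b l h =>
    rw [eval_unionAll]
    constructor
    · rintro (hb | ⟨f, hf, he⟩)
      · exact ⟨b, hb⟩
      · obtain ⟨b', hb', rfl⟩ := List.mem_map.mp hf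
        exact ⟨b', he⟩
    · rintro ⟨b', hb'⟩
      have : b' ∈ b :: l := by
        rw [← h]; exact Finset.mem_toList.mpr (Finset.mem_univ b')
      rw [List.mem_cons] at this
      rcases this with rfl | hmem
      · exact Or.inl hb'
      · exact Or.inr ⟨.var (.term b'), List.mem_map.mpr ⟨b', hmem, rfl⟩, hb'⟩

lemma eval_ruleExpr {T N D : Type} (I : Voc T N → D → D → Prop) (r : ContextFreeRule T N)
    {s : Symbol T N} {l : List (Symbol T N)} (hout : r.output = s :: l) (x y : D) :
    eval I (ruleExpr r) x y ↔
      ∃ u, I .alpha x u ∧ ∃ v,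
        (relChain (fun t p q => I (symVoc t) p q) (s :: l) u v ∧ ¬ I (.nt r.input) u v) ∧
          I .alpha v y := by
  unfold ruleExpr
  rw [hout]
  simp only [eval, eval_compAll_map symVoc]

lemma eval_eG_iff (T : Type) [Fintype T] [Nonempty T] (G : ContextFreeGrammar T)
    {D : Type} (I : Voc T G.NT → D → D → Prop) (x y : D) :
    eval I (eG T G) x y ↔
      ((∃ u, I .alpha x u ∧ ∃ v, (∃ b, I (.term b) u v) ∧ I .omega v y) ∧
        ¬(((∃ u, I .alpha x u ∧ ∃ v, (∃ b, I (.term b) u v) ∧ (I .omega v y ∧ ¬ I .alpha v y)) ∨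
          (∃ u, I .alpha x u ∧ ((∃ z, (∃ b, I (.term b) u z) ∧ I .alpha z y) ∧ ¬ I .alpha u y)) ∨
          (∃ u, (I .alpha x u ∧ ¬(∃ z, I .alpha x z ∧ ∃ b, I (.term b) z u)) ∧
            ∃ v, I (.nt G.initial) u v ∧ I .omega v y) ∨
          (∃ u, I .alpha x u ∧ ∃ v, ((∃ b, I (.term b) u v) ∧ ¬ I .X u v) ∧ I .alpha v y) ∨
          (∃ u, I .alpha x u ∧ ∃ v, ((∃ z, I .X u z ∧ I .X z v) ∧ ¬ I .X u v) ∧ I .alpha v y) ∨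
          (∃ u, I .alpha x u ∧ ∃ v,
            ((∃ z, I .X u z ∧ ∃ b, I (.term b) z v) ∧ (∃ b, I (.term b) u v)) ∧ I .alpha v y)) ∨
          (∃ r ∈ G.rules, eval I (ruleExpr r) x y))) := by
  classical
  have hmap : (∃ f ∈ G.rules.toList.map ruleExpr, eval I f x y) ↔
      ∃ r ∈ G.rules, eval I (ruleExpr r) x y := by
    constructor
    · rintro ⟨f, hf, he⟩
      obtain ⟨r, hr, rfl⟩ := List.mem_map.mp hf
      exact ⟨r, Finset.mem_toList.mp hr, he⟩
    · rintro ⟨r, hr, he⟩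
      exact ⟨ruleExpr r, List.mem_map.mpr ⟨r, Finset.mem_toList.mpr hr, rfl⟩, he⟩
  have key : eval I (eG T G) x y ↔
      (eval I (.comp (.var .alpha) (.comp (sigmaE T G.NT) (.var .omega))) x y ∧
        ¬(eval I
            (.union (.comp (.var .alpha) (.comp (sigmaE T G.NT) (.diff (.var .omega) (.var .alpha))))
            (.union (.comp (.var .alpha) (.diff (.comp (sigmaE T G.NT) (.var .alpha)) (.var .alpha)))
            (.union (.comp (.diff (.var .alpha) (.comp (.var .alpha) (sigmaE T G.NT)))
                      (.comp (.var (.nt G.initial)) (.var .omega)))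
            (.union (.comp (.var .alpha) (.comp (.diff (sigmaE T G.NT) (.var .X)) (.var .alpha)))
            (.union (.comp (.var .alpha)
                      (.comp (.diff (.comp (.var .X) (.var .X)) (.var .X)) (.var .alpha)))
                    (.comp (.var .alpha)
                      (.comp (.inter (.comp (.var .X) (sigmaE T G.NT)) (sigmaE T G.NT))
                        (.var .alpha)))))))) x y ∨
          ∃ r ∈ G.rules, eval I (ruleExpr r) x y)) := by
    rw [← hmap]
    rw [show (eval I (eG T G) x y ↔ _) from Iff.rfl.trans (Iff.rfl)]
    exact and_congr Iff.rfl (not_congr (eval_unionAll _ _ x y))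
  rw [key]
  exact and_congr (by simp only [eval, eval_sigmaE])
    (not_congr (or_congr (by simp only [eval, eval_sigmaE]) Iff.rfl))
lemma main_unsat {T : Type} [Fintype T] [Nonempty T] (G : ContextFreeGrammar T)
    (hG : ∀ r ∈ G.rules, r.output ≠ []) {D : Type} (I : Voc T G.NT → D → D → Prop)
    (hfin : DA.FiniteStruct I) {x y : D} (hxy : eval I (eG T G) x y)
    (hall : ∀ w : List T, w ≠ [] → w ∈ G.language) : False := by
  classical
  rw [eval_eG_iff] at hxy
  obtain ⟨⟨u₀, hau, v₀, ⟨b₀, hb₀⟩, hov⟩, hneg⟩ := hxy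
  have hφ1 : ¬(∃ u, I .alpha x u ∧ ∃ v, (∃ b, I (.term b) u v) ∧
      (I .omega v y ∧ ¬ I .alpha v y)) := fun h => hneg (Or.inl (Or.inl h))
  have hφ2 : ¬(∃ u, I .alpha x u ∧ ((∃ z, (∃ b, I (.term b) u z) ∧ I .alpha z y) ∧
      ¬ I .alpha u y)) := fun h => hneg (Or.inl (Or.inr (Or.inl h)))
  have hφ4 : ¬(∃ u, (I .alpha x u ∧ ¬(∃ z, I .alpha x z ∧ ∃ b, I (.term b) z u)) ∧
      ∃ v, I (.nt G.initial) u v ∧ I .omega v y) :=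
    fun h => hneg (Or.inl (Or.inr (Or.inr (Or.inl h))))
  have hφ5 : ¬(∃ u, I .alpha x u ∧ ∃ v, ((∃ b, I (.term b) u v) ∧ ¬ I .X u v) ∧
      I .alpha v y) := fun h => hneg (Or.inl (Or.inr (Or.inr (Or.inr (Or.inl h)))))
  have hφ6 : ¬(∃ u, I .alpha x u ∧ ∃ v, ((∃ z, I .X u z ∧ I .X z v) ∧ ¬ I .X u v) ∧
      I .alpha v y) := fun h => hneg (Or.inl (Or.inr (Or.inr (Or.inr (Or.inr (Or.inl h))))))
  have hφ7 : ¬(∃ u, I .alpha x u ∧ ∃ v,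
      ((∃ z, I .X u z ∧ ∃ b, I (.term b) z v) ∧ (∃ b, I (.term b) u v)) ∧ I .alpha v y) :=
    fun h => hneg (Or.inl (Or.inr (Or.inr (Or.inr (Or.inr (Or.inr h))))))
  have hφ3 : ¬(∃ r ∈ G.rules, eval I (ruleExpr r) x y) := fun h => hneg (Or.inr h)
  -- derived facts
  have hA2 : ∀ u z, I .alpha x u → (∃ b, I (.term b) u z) → I .alpha z y → I .alpha u y := by
    intro u z h1 h2 h3
    by_contra hn
    exact hφ2 ⟨u, h1, ⟨z, h2, h3⟩, hn⟩
  have hX5 : ∀ u v, I .alpha x u → (∃ b, I (.term b) u v) → I .alpha v y → I .X u v := by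
    intro u v h1 h2 h3
    by_contra hn
    exact hφ5 ⟨u, h1, v, ⟨h2, hn⟩, h3⟩
  have hX6 : ∀ u z v, I .alpha x u → I .X u z → I .X z v → I .alpha v y → I .X u v := by
    intro u z v h1 h2 h3 h4
    by_contra hn
    exact hφ6 ⟨u, h1, v, ⟨⟨z, h2, h3⟩, hn⟩, h4⟩
  have h7' : ∀ u z v, I .alpha x u → I .X u z → (∃ b, I (.term b) z v) →
      (∃ b, I (.term b) u v) → I .alpha v y → False := by
    intro u z v h1 h2 h3 h4 h5
    exact hφ7 ⟨u, h1, v, ⟨⟨z, h2, h3⟩, h4⟩, h5⟩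
  have h3' : ∀ r ∈ G.rules, ∀ u v, I .alpha x u →
      relChain (fun t p q => I (symVoc t) p q) r.output u v → I .alpha v y →
        I (.nt r.input) u v := by
    intro r hr u v h1 h2 h3
    by_contra hn
    obtain ⟨s, l, heq⟩ : ∃ s l, r.output = s :: l := by
      cases hout : r.output with
      | nil => exact absurd hout (hG r hr)
      | cons s l => exact ⟨s, l, rfl⟩
    rw [heq] at h2
    exact hφ3 ⟨r, hr, (eval_ruleExpr I r heq x y).mpr ⟨u, h1, v, ⟨h2, hn⟩, h3⟩⟩
  have hav₀ : I .alpha v₀ y := by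
    by_contra hn
    exact hφ1 ⟨u₀, hau, v₀, ⟨b₀, hb₀⟩, hov, hn⟩
  -- the invariant relation
  set R' : Symbol T G.NT → D → D → Prop :=
    fun s p q => I (symVoc s) p q ∧ I .alpha x p ∧ I .alpha q y with hR'
  have hstep : ∀ (γ γ' : List (Symbol T G.NT)) (p q : D), G.Produces γ γ' →
      relChain R' γ' p q → I .alpha x p → I .alpha q y → relChain R' γ p q := by
    rintro γ γ' p q ⟨r, hr, hrw⟩ hch hp hq
    obtain ⟨pre, suf, rfl, rfl⟩ := hrw.exists_parts
    rw [List.append_assoc, relChain_append] at hch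
    obtain ⟨m₁, hpre, hrest⟩ := hch
    rw [relChain_append] at hrest
    obtain ⟨m₂, hout, hsuf⟩ := hrest
    have hne : r.output ≠ [] := hG r hr
    have hm1 : I .alpha x m₁ :=
      relChain_head (P := fun p => I .alpha x p) (fun s p q h => h.2.1) hne hout
    have hm2 : I .alpha m₂ y :=
      relChain_last (P := fun q => I .alpha q y) (fun s p q h => h.2.2) hne hout
    have hnt : I (.nt r.input) m₁ m₂ :=
      h3' r hr m₁ m₂ hm1 (relChain_mono (fun s p q h => h.1) _ _ _ hout) hm2
    rw [List.append_assoc, relChain_append]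
    refine ⟨m₁, hpre, ?_⟩
    rw [relChain_append]
    exact ⟨m₂, (relChain_single _ _ _ _).mpr ⟨hnt, hm1, hm2⟩, hsuf⟩
  have hderives : ∀ (γ τ : List (Symbol T G.NT)), G.Derives γ τ → ∀ p q,
      relChain R' τ p q → I .alpha x p → I .alpha q y → relChain R' γ p q := by
    intro γ τ h
    induction h using Relation.ReflTransGen.head_induction_on with
    | refl => exact fun p q hc _ _ => hc
    | head hac hcb ih => exact fun p q hc hp hq => hstep _ _ _ _ hac (ih p q hc hp hq) hp hq
  -- the finite set of chain heads
  set F' : Set D :=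
    {d | I .alpha x d ∧ I .alpha d y ∧ ∃ e, I .alpha e y ∧ ∃ b, I (.term b) d e} with hF'
  have hF'fin : F'.Finite := by
    have hsub : F' ⊆ ⋃ b : T, Prod.fst '' {p : D × D | I (.term b) p.1 p.2} := by
      rintro d ⟨-, -, e, -, b, hb⟩
      exact Set.mem_iUnion.mpr ⟨b, ⟨(d, e), hb, rfl⟩⟩
    exact (Set.finite_iUnion fun b => (hfin (.term b)).image _).subset hsub
  haveI : Finite ↥F' := hF'fin.to_subtype
  let rel : ↥F' → ↥F' → Prop := fun a b => I .X a.1 b.1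
  haveI : IsTrans ↥F' rel := ⟨fun a b c hab hbc => hX6 a.1 b.1 c.1 a.2.1 hab hbc c.2.2.1⟩
  haveI : IsIrrefl ↥F' rel := by
    refine ⟨fun a haa => ?_⟩
    obtain ⟨hax, hay, e, hey, b, hb⟩ := a.2
    exact h7' a.1 a.1 e hax haa ⟨b, hb⟩ ⟨b, hb⟩ hey
  have hwf : WellFounded rel := Finite.wellFounded_of_trans_of_irrefl rel
  have main : ∀ d : ↥F', ∀ w' : List T, w' ≠ [] → I .alpha x d.1 →
      relChain R' (w'.map Symbol.terminal) d.1 v₀ → False := by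
    intro d
    refine WellFounded.induction (C := fun d : ↥F' => ∀ w' : List T, w' ≠ [] → I .alpha x d.1 →
        relChain R' (w'.map Symbol.terminal) d.1 v₀ → False) hwf d ?_
    rintro ⟨d, hdF⟩ IH w' hw' hx' hch
    cases w' with
    | nil => exact absurd rfl hw'
    | cons b w'' =>
      obtain ⟨e, he, hch'⟩ := hch
      have hdy : I .alpha d y := hA2 d e hx' ⟨b, he.1⟩ he.2.2
      by_cases hpred : ∃ z, I .alpha x z ∧ ∃ b', I (.term b') z d
      · obtain ⟨z, hz, b', hb'⟩ := hpred
        have hzy : I .alpha z y := hA2 z d hz ⟨b', hb'⟩ hdy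
        have hzF : z ∈ F' := ⟨hz, hzy, d, hdy, b', hb'⟩
        have hXzd : I .X z d := hX5 z d hz ⟨b', hb'⟩ hdy
        exact IH ⟨z, hzF⟩ hXzd (b' :: b :: w'') (by simp) hz
          ⟨d, ⟨hb', hz, hdy⟩, e, he, hch'⟩
      · have hwL := hall (b :: w'') (by simp)
        rw [ContextFreeGrammar.mem_language_iff] at hwL
        have hchain := hderives _ _ hwL d v₀ ⟨e, he, hch'⟩ hx' hav₀
        rw [relChain_single] at hchain
        exact hφ4 ⟨d, ⟨hx', hpred⟩, v₀, hchain.1, hov⟩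
  have hu0y : I .alpha u₀ y := hA2 u₀ v₀ hau ⟨b₀, hb₀⟩ hav₀
  have hu0F : u₀ ∈ F' := ⟨hau, hu0y, v₀, hav₀, b₀, hb₀⟩
  exact main ⟨u₀, hu0F⟩ [b₀] (by simp) hau ⟨v₀, ⟨hb₀, hau, hav₀⟩, rfl⟩

/-- The canonical finite model built from a word `w` not generated by `G`. -/
def mI {T : Type} (G : ContextFreeGrammar T) (w : List T) :
    Voc T G.NT → Option ℕ → Option ℕ → Prop
  | .term b, p, q => ∃ i, p = some i ∧ q = some (i + 1) ∧ w[i]? = some b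
  | .nt Z, p, q => ∃ i j, p = some i ∧ q = some j ∧ i < j ∧ j ≤ w.length ∧
      G.Derives [Symbol.nonterminal Z] (((w.drop i).take (j - i)).map Symbol.terminal)
  | .alpha, p, q => (p = some 0 ∧ ∃ i ≤ w.length, q = some i) ∨
      (∃ i ≤ w.length, p = some i ∧ q = none)
  | .omega, p, q => p = some w.length ∧ q = none
  | .X, p, q => ∃ i j, p = some i ∧ q = some j ∧ i < j ∧ j ≤ w.length

lemma take_add' {α : Type} (b : ℕ) : ∀ (l : List α) (a : ℕ),
    l.take (a + b) = l.take a ++ (l.drop a).take b := by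
  intro l
  induction l with
  | nil => simp
  | cons c l ih =>
    intro a
    cases a with
    | zero => simp
    | succ a =>
      have harith : a + 1 + b = (a + b) + 1 := by omega
      rw [harith]
      simp only [List.take_succ_cons, List.drop_succ_cons, List.cons_append]
      rw [ih]

lemma slice_append {α : Type} (w : List α) {i j k : ℕ} (hij : i ≤ j) (hjk : j ≤ k) :
    (w.drop i).take (j - i) ++ (w.drop j).take (k - j) = (w.drop i).take (k - i) := by
  have h : k - i = (j - i) + (k - j) := by omega
  rw [h, take_add', List.drop_drop]
  have h2 : i + (j - i) = j := by omega
  rw [h2]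

lemma mI_sym {T : Type} (G : ContextFreeGrammar T) (w : List T) (s : Symbol T G.NT)
    {p q : Option ℕ} (hs : mI G w (symVoc s) p q) :
    ∃ i j, p = some i ∧ q = some j ∧ i < j ∧ j ≤ w.length ∧
      G.Derives [s] (((w.drop i).take (j - i)).map Symbol.terminal) := by
  cases s with
  | terminal b =>
    obtain ⟨i, rfl, rfl, hb⟩ := hs
    obtain ⟨hilt, hget⟩ := List.getElem?_eq_some_iff.mp hb
    refine ⟨i, i + 1, rfl, rfl, by omega, by omega, ?_⟩
    have hdrop : w.drop i = w[i] :: w.drop (i + 1) := List.drop_eq_getElem_cons hilt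
    have : (w.drop i).take (i + 1 - i) = [b] := by
      rw [hdrop]
      simp [Nat.add_sub_cancel_left, hget]
    rw [this]
    exact ContextFreeGrammar.Derives.refl _
  | nonterminal Z =>
    obtain ⟨i, j, rfl, rfl, hij, hj, hd⟩ := hs
    exact ⟨i, j, rfl, rfl, hij, hj, hd⟩

lemma mI_chain {T : Type} (G : ContextFreeGrammar T) (w : List T) :
    ∀ (l : List (Symbol T G.NT)) (s : Symbol T G.NT) (p q : Option ℕ),
      relChain (fun t p q => mI G w (symVoc t) p q) (s :: l) p q →
        ∃ i j, p = some i ∧ q = some j ∧ i < j ∧ j ≤ w.length ∧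
          G.Derives (s :: l) (((w.drop i).take (j - i)).map Symbol.terminal) := by
  intro l
  induction l with
  | nil =>
    intro s p q hc
    rw [relChain_single] at hc
    exact mI_sym G w s hc
  | cons t l ih =>
    intro s p q hc
    obtain ⟨m, hm, hc⟩ := hc
    obtain ⟨i, j, rfl, rfl, hij, hj, hd1⟩ := mI_sym G w s hm
    obtain ⟨j', k, hj'eq, rfl, hjk, hk, hd2⟩ := ih t _ q hc
    have hjj : j = j' := by injection hj'eq
    subst hjj
    refine ⟨i, k, rfl, rfl, by omega, hk, ?_⟩
    have step1 : G.Derives ([s] ++ (t :: l))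
        ((((w.drop i).take (j - i)).map Symbol.terminal) ++ (t :: l)) :=
      ContextFreeGrammar.Derives.append_right hd1 _
    have step2 : G.Derives
        ((((w.drop i).take (j - i)).map Symbol.terminal) ++ (t :: l))
        ((((w.drop i).take (j - i)).map Symbol.terminal) ++
          (((w.drop j).take (k - j)).map Symbol.terminal)) :=
      ContextFreeGrammar.Derives.append_left hd2 _
    have := step1.trans step2
    rw [← List.map_append, slice_append w (by omega) (by omega)] at this
    exact this

lemma mI_finite {T : Type} (G : ContextFreeGrammar T) (w : List T) :
    DA.FiniteStruct (mI G w) := by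
  intro a
  have hS : (insert none ((fun i => some i) '' Set.Iic w.length) : Set (Option ℕ)).Finite :=
    ((Set.finite_Iic w.length).image _).insert none
  refine Set.Finite.subset (hS.prod hS) ?_
  rintro ⟨p, q⟩ hpq
  cases a with
  | term b =>
    obtain ⟨i, rfl, rfl, hb⟩ := hpq
    obtain ⟨hlt, -⟩ := List.getElem?_eq_some_iff.mp hb
    constructor <;> simp <;> omega
  | nt Z =>
    obtain ⟨i, j, rfl, rfl, hij, hj, -⟩ := hpq
    constructor <;> simp <;> omega
  | alpha =>
    rcases hpq with ⟨rfl, i, hi, rfl⟩ | ⟨i, hi, rfl, rfl⟩ <;> constructor <;> simp <;> omega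
  | omega =>
    obtain ⟨rfl, rfl⟩ := hpq
    constructor <;> simp
  | X =>
    obtain ⟨i, j, rfl, rfl, hij, hj⟩ := hpq
    constructor <;> simp <;> omega

end Helpers

/-- A context-free grammar G (over a nonempty finite terminal alphabet, without
empty productions) fails to generate some nonempty word over Σ if and only if
the expression e_G is finitely satisfiable. -/
theorem stmt2 (T : Type) [Fintype T] [Nonempty T] (G : ContextFreeGrammar T)
    (hG : ∀ r ∈ G.rules, r.output ≠ []) :
    (∃ w : List T, w ≠ [] ∧ w ∉ G.language) ↔ DA.FinSat (eG T G) := by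
  classical
  constructor
  · rintro ⟨w, hw, hwL⟩
    refine ⟨Option ℕ, mI G w, mI_finite G w, some 0, none, ?_⟩
    rw [eval_eG_iff]
    have hnpos : 0 < w.length := List.length_pos_iff.mpr hw
    constructor
    · -- φ₀ holds
      refine ⟨some (w.length - 1), Or.inl ⟨rfl, w.length - 1, by omega, rfl⟩,
        some w.length, ⟨w[w.length - 1]'(by omega), w.length - 1, rfl,
          by rw [Nat.sub_add_cancel hnpos], List.getElem?_eq_getElem (by omega)⟩, rfl, rfl⟩
    · rintro ((h | h | h | h | h | h) | h)
      · -- φ₁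
        obtain ⟨u, -, v, -, ⟨rfl, -⟩, hna⟩ := h
        exact hna (Or.inr ⟨w.length, le_rfl, rfl, rfl⟩)
      · -- φ₂
        obtain ⟨u, -, ⟨z, ⟨b, i, rfl, rfl, hb⟩, -⟩, hna⟩ := h
        obtain ⟨hlt, -⟩ := List.getElem?_eq_some_iff.mp hb
        exact hna (Or.inr ⟨i, by omega, rfl, rfl⟩)
      · -- φ₄
        obtain ⟨u, ⟨-, hnpred⟩, v, hS, rfl, -⟩ := h
        obtain ⟨i, j, rfl, hjeq, hij, hj, hd⟩ := hS
        have hjlen : j = w.length := by injection hjeq.symm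
        subst hjlen
        by_cases hi : i = 0
        · subst hi
          have hslice : (w.drop 0).take (w.length - 0) = w := by simp
          rw [hslice] at hd
          exact hwL hd
        · exact hnpred ⟨some (i - 1), Or.inl ⟨rfl, i - 1, by omega, rfl⟩,
            w[i - 1]'(by omega), i - 1, rfl,
            by congr 1; omega,
            List.getElem?_eq_getElem (by omega)⟩
      · -- φ₅
        obtain ⟨u, -, v, ⟨⟨b, i, rfl, rfl, hb⟩, hnX⟩, -⟩ := h
        obtain ⟨hlt, -⟩ := List.getElem?_eq_some_iff.mp hb
        exact hnX ⟨i, i + 1, rfl, rfl, by omega, by omega⟩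
      · -- φ₆
        obtain ⟨u, -, v, ⟨⟨z, hx1, hx2⟩, hnX⟩, -⟩ := h
        obtain ⟨i, j, rfl, rfl, hij, hj⟩ := hx1
        obtain ⟨j', k, hj'eq, rfl, hjk, hk⟩ := hx2
        have : j = j' := by injection hj'eq
        subst this
        exact hnX ⟨i, k, rfl, rfl, by omega, hk⟩
      · -- φ₇
        obtain ⟨u, -, v, ⟨⟨z, hX, hzv⟩, huv⟩, -⟩ := h
        obtain ⟨i0, j0, rfl, rfl, hij, -⟩ := hX
        obtain ⟨b, j1, hz1, hv1, -⟩ := hzv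
        obtain ⟨b', i1, hu1, hv2, -⟩ := huv
        have e1 : j0 = j1 := by injection hz1
        have e2 : i0 = i1 := by injection hu1
        rw [hv1] at hv2
        have e3 : j1 + 1 = i1 + 1 := by injection hv2
        omega
      · -- φ₃
        obtain ⟨r, hr, he⟩ := h
        obtain ⟨s, l, heq⟩ : ∃ s l, r.output = s :: l := by
          cases hout : r.output with
          | nil => exact absurd hout (hG r hr)
          | cons s l => exact ⟨s, l, rfl⟩
        rw [eval_ruleExpr _ r heq] at he
        obtain ⟨u, -, v, ⟨hchain, hnt⟩, -⟩ := he
        obtain ⟨i, j, rfl, rfl, hij, hj, hd⟩ := mI_chain G w l s u v hchain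
        rw [← heq] at hd
        exact hnt ⟨i, j, rfl, rfl, hij, hj,
          (ContextFreeGrammar.Produces.trans_derives
            ⟨r, hr, ContextFreeRule.Rewrites.input_output⟩ hd)⟩
  · rintro ⟨D, I, hfin, x, y, hxy⟩
    by_contra hcon
    push_neg at hcon
    exact main_unsat G hG I hfin hxy hcon
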